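/- arXiv:2602.05241 — 2 statements merged into one kernel-verified Lean document; each statement's English description precedes it below -/
import Mathlib

section
/- Let A > 0, B ∈ ℝ, e ∈ ℝ. Define Z₁(w₁) = −A/2 + √A·w₁ and Z₂(w₁,w₂) = −B + (B/√A)·w₁ + e·w₂. Then the integral of (w₁, w₂) ↦ 1_{{Z₁(w₁) < 0}}·exp(Z₁(w₁))·Z₂(w₁,w₂) with respect to the product of two standard Gaussian measures on ℝ² equals −(B/√A)·φ(√A/2). (Exponentially tilted Gaussian computation of E[1_{{Z₁<0}} e^{Z₁} Z₂] for the bivariate Gaussian vector with mean (−A/2, −B) and Cov(Z₁,Z₂) = B, Var Z₁ = A, used in the proof of Theorem 4 of the paper.) -/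
open MeasureTheory ProbabilityTheory Real Set Filter Topology
open scoped NNReal ENNReal

/-- Standard normal density. -/
noncomputable def stdPhi (x : ℝ) : ℝ := Real.exp (-x ^ 2 / 2) / Real.sqrt (2 * Real.pi)

lemma stdPhi_eq_pdf (x : ℝ) : gaussianPDFReal 0 1 x = stdPhi x := by
  simp [gaussianPDFReal, stdPhi, div_eq_mul_inv, mul_comm]

lemma stdPhi_neg (x : ℝ) : stdPhi (-x) = stdPhi x := by simp [stdPhi, neg_sq]

lemma stdPhi_eq (x : ℝ) : stdPhi x = Real.exp (-(1/2) * x^2) * (Real.sqrt (2*Real.pi))⁻¹ := by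
  have h : -x^2/2 = -(1/2) * x^2 := by ring
  unfold stdPhi
  rw [h, div_eq_mul_inv]

lemma integral_gauss_eq (g : ℝ → ℝ) :
    ∫ x, g x ∂(gaussianReal 0 1) = ∫ x, stdPhi x * g x := by
  rw [gaussianReal_of_var_ne_zero 0 one_ne_zero]
  have hd : (gaussianPDF 0 1)
      = fun x => ((Real.toNNReal (gaussianPDFReal 0 1 x) : ℝ≥0) : ℝ≥0∞) := rfl
  rw [hd, integral_withDensity_eq_integral_smul
    ((measurable_gaussianPDFReal 0 1).real_toNNReal) g]
  congr 1; funext x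
  rw [NNReal.smul_def, Real.coe_toNNReal _ (gaussianPDFReal_nonneg 0 1 x), stdPhi_eq_pdf,
    smul_eq_mul]

lemma integrable_gauss_iff (g : ℝ → ℝ) :
    Integrable g (gaussianReal 0 1) ↔ Integrable (fun x => stdPhi x * g x) volume := by
  rw [gaussianReal_of_var_ne_zero 0 one_ne_zero]
  have hd : (gaussianPDF 0 1)
      = fun x => ((Real.toNNReal (gaussianPDFReal 0 1 x) : ℝ≥0) : ℝ≥0∞) := rfl
  rw [hd, integrable_withDensity_iff_integrable_smul
    ((measurable_gaussianPDFReal 0 1).real_toNNReal)]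
  have : ∀ x : ℝ, (Real.toNNReal (gaussianPDFReal 0 1 x) : ℝ≥0) • g x = stdPhi x * g x := by
    intro x
    rw [NNReal.smul_def, Real.coe_toNNReal _ (gaussianPDFReal_nonneg 0 1 x), stdPhi_eq_pdf,
      smul_eq_mul]
  simp_rw [this]
  
lemma integrable_stdPhi : Integrable stdPhi := by
  simp_rw [funext stdPhi_eq]
  exact (integrable_exp_neg_mul_sq one_half_pos).mul_const _

lemma integrable_mul_stdPhi : Integrable (fun x => x * stdPhi x) := by
  have : (fun x : ℝ => x * stdPhi x)
      = fun x => (x * Real.exp (-(1/2) * x^2)) * (Real.sqrt (2*Real.pi))⁻¹ := by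
    funext x; rw [stdPhi_eq]; ring
  rw [this]
  exact (integrable_mul_exp_neg_mul_sq one_half_pos).mul_const _

lemma hasDerivAt_stdPhi (x : ℝ) : HasDerivAt stdPhi (-x * stdPhi x) x := by
  have h1 : HasDerivAt (fun y : ℝ => -y^2/2) (-x) x := by
    have h := (hasDerivAt_pow 2 x).neg.div_const 2
    simp only [Nat.cast_ofNat, pow_one] at h
    refine h.congr_deriv ?_
    ring
  have h2 : HasDerivAt (fun y : ℝ => Real.exp (-y^2/2) / Real.sqrt (2*Real.pi))
      (Real.exp (-x^2/2) * (-x) / Real.sqrt (2*Real.pi)) x := h1.exp.div_const _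
  have he : stdPhi = fun y : ℝ => Real.exp (-y^2/2) / Real.sqrt (2*Real.pi) := rfl
  rw [he]
  convert h2 using 1
  simp only [stdPhi]
  ring

lemma tendsto_stdPhi_atBot : Tendsto stdPhi atBot (𝓝 0) := by
  have hsq : Tendsto (fun x : ℝ => x^2) atBot atTop := by
    have h := (tendsto_pow_atTop (α := ℝ) (n := 2) (by norm_num)).comp
      (tendsto_neg_atBot_atTop (G := ℝ))
    simpa [Function.comp_def, neg_sq] using h
  have h1 : Tendsto (fun x : ℝ => -x^2/2) atBot atBot := by
    apply Tendsto.atBot_div_const (by norm_num : (0:ℝ) < 2)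
    exact tendsto_neg_atTop_atBot.comp hsq
  have h2 := (Real.tendsto_exp_atBot.comp h1).div_const (Real.sqrt (2*Real.pi))
  unfold stdPhi
  simpa [Function.comp_def] using h2

lemma main1d (B s : ℝ) (hs : 0 < s) :
    ∫ x in Iio (s/2), (-B + B/s * x) * stdPhi (x - s) = -(B/s) * stdPhi (s/2) := by
  rw [← integral_Iic_eq_integral_Iio]
  have hd : ∀ x ∈ Iic (s/2),
      HasDerivAt (fun y => -(B/s) * stdPhi (y - s)) ((-B + B/s*x) * stdPhi (x-s)) x := by
    intro x _
    have hinner : HasDerivAt (fun y : ℝ => y - s) 1 x := (hasDerivAt_id x).sub_const s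
    have h := ((hasDerivAt_stdPhi (x - s)).comp x hinner).const_mul (-(B/s))
    refine h.congr_deriv ?_
    field_simp
    ring
  have hglob : Integrable (fun x => (-B + B/s*x) * stdPhi (x-s)) volume := by
    refine ((integrable_mul_stdPhi.comp_sub_right s).const_mul (B/s)).congr
      (ae_of_all _ fun x => ?_)
    field_simp
    ring
  have htend : Tendsto (fun y => -(B/s) * stdPhi (y - s)) atBot (𝓝 0) := by
    have hshift : Tendsto (fun y : ℝ => y - s) atBot atBot :=
      tendsto_atBot_add_const_right _ (-s) tendsto_id
    have h := (tendsto_stdPhi_atBot.comp hshift).const_mul (-(B/s))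
    simpa [Function.comp_def] using h
  rw [integral_Iic_of_hasDerivAt_of_tendsto' hd hglob.integrableOn htend]
  rw [show s/2 - s = -(s/2) by ring, stdPhi_neg, sub_zero]

lemma gauss_mean_zero : ∫ x, x ∂(gaussianReal 0 1) = 0 := by
  rw [integral_gauss_eq]
  have h := integral_neg_eq_self (fun x => stdPhi x * x) (volume : Measure ℝ)
  simp only [stdPhi_neg, mul_neg] at h
  rw [integral_neg] at h
  linarith

/-- Exponentially tilted Gaussian computation: for the bivariate Gaussian vector
`Z₁ = -A/2 + √A w₁`, `Z₂ = -B + (B/√A) w₁ + e w₂` (mean `(-A/2, -B)`, `Var Z₁ = A`,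
`Cov(Z₁,Z₂) = B`), one has `E[1_{Z₁<0} e^{Z₁} Z₂] = -(B/√A) φ(√A/2)`. -/
theorem tilted_gaussian_half_space_mean (A B e : ℝ) (hA : 0 < A) :
    ∫ w : ℝ × ℝ, ({w : ℝ × ℝ | -A / 2 + Real.sqrt A * w.1 < 0}.indicator
        (fun w => Real.exp (-A / 2 + Real.sqrt A * w.1) *
          (-B + B / Real.sqrt A * w.1 + e * w.2)) w)
      ∂((gaussianReal 0 1).prod (gaussianReal 0 1))
      = -(B / Real.sqrt A) * stdPhi (Real.sqrt A / 2) := by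
  set s := Real.sqrt A with hs_def
  have hs : 0 < s := Real.sqrt_pos.mpr hA
  have hs2 : s^2 = A := Real.sq_sqrt hA.le
  set F₁ : ℝ → ℝ :=
    (Iio (s/2)).indicator (fun x => Real.exp (-A/2 + s*x) * (-B + B/s*x)) with hF₁def
  set V : ℝ → ℝ := (Iio (s/2)).indicator (fun x => Real.exp (-A/2 + s*x) * e) with hVdef
  have hcond : ∀ x : ℝ, (-A/2 + s*x < 0) ↔ x < s/2 := by
    intro x
    constructor
    · intro h
      have h2 : s * x < s * (s / 2) := by nlinarith
      exact (mul_lt_mul_iff_right₀ hs).mp h2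
    · intro h
      have h2 : s * x < s * (s/2) := (mul_lt_mul_iff_right₀ hs).mpr h
      nlinarith
  have hstep : (fun w : ℝ × ℝ => ({w : ℝ × ℝ | -A / 2 + s * w.1 < 0}.indicator
      (fun w => Real.exp (-A / 2 + s * w.1) * (-B + B / s * w.1 + e * w.2)) w))
      = fun w => F₁ w.1 + V w.1 * w.2 := by
    funext w
    by_cases h : w.1 < s/2
    · rw [indicator_of_mem (show w ∈ {w : ℝ × ℝ | -A/2 + s*w.1 < 0} from (hcond w.1).mpr h),
        hF₁def, hVdef, indicator_of_mem (show w.1 ∈ Iio (s/2) from h),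
        indicator_of_mem (show w.1 ∈ Iio (s/2) from h)]
      ring
    · rw [indicator_of_notMem
          (show w ∉ {w : ℝ × ℝ | -A/2 + s*w.1 < 0} from fun hw => h ((hcond w.1).mp hw)),
        hF₁def, hVdef, indicator_of_notMem (show w.1 ∉ Iio (s/2) from h),
        indicator_of_notMem (show w.1 ∉ Iio (s/2) from h)]
      ring
  have tilt : ∀ x : ℝ, stdPhi x * Real.exp (-A/2 + s*x) = stdPhi (x - s) := by
    intro x
    unfold stdPhi
    rw [div_mul_eq_mul_div, ← Real.exp_add,
      show -x^2/2 + (-A/2 + s*x) = -(x-s)^2/2 by rw [← hs2]; ring]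
  have hglob : Integrable (fun x => (-B + B/s*x) * stdPhi (x - s)) volume := by
    refine ((integrable_mul_stdPhi.comp_sub_right s).const_mul (B/s)).congr
      (ae_of_all _ fun x => ?_)
    field_simp
    ring
  have hstdF₁ : (fun x => stdPhi x * F₁ x)
      = (Iio (s/2)).indicator (fun x => (-B + B/s*x) * stdPhi (x - s)) := by
    funext x
    by_cases h : x < s/2
    · rw [hF₁def, indicator_of_mem (show x ∈ Iio (s/2) from h),
        indicator_of_mem (show x ∈ Iio (s/2) from h), ← tilt x]
      ring
    · rw [hF₁def, indicator_of_notMem (show x ∉ Iio (s/2) from h),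
        indicator_of_notMem (show x ∉ Iio (s/2) from h), mul_zero]
  have hF₁int : Integrable F₁ (gaussianReal 0 1) := by
    rw [integrable_gauss_iff, hstdF₁]
    exact hglob.indicator measurableSet_Iio
  have hVint : Integrable V (gaussianReal 0 1) := by
    rw [integrable_gauss_iff]
    have hv : (fun x => stdPhi x * V x)
        = (Iio (s/2)).indicator (fun x => stdPhi (x - s) * e) := by
      funext x
      by_cases h : x < s/2
      · rw [hVdef, indicator_of_mem (show x ∈ Iio (s/2) from h),
          indicator_of_mem (show x ∈ Iio (s/2) from h), ← tilt x]
        ring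
      · rw [hVdef, indicator_of_notMem (show x ∉ Iio (s/2) from h),
          indicator_of_notMem (show x ∉ Iio (s/2) from h), mul_zero]
    rw [hv]
    exact ((integrable_stdPhi.comp_sub_right s).mul_const e).indicator measurableSet_Iio
  have hidint : Integrable (fun x : ℝ => x) (gaussianReal 0 1) := by
    rw [integrable_gauss_iff]
    exact integrable_mul_stdPhi.congr (ae_of_all _ fun x => by ring)
  rw [hstep, integral_add
    ((hF₁int.mul_prod (integrable_const 1)).congr (ae_of_all _ fun w => by simp))
    (hVint.mul_prod hidint)]
  rw [integral_fun_fst (f := F₁),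
    integral_prod_mul (μ := gaussianReal 0 1) (ν := gaussianReal 0 1) V (fun y => y),
    gauss_mean_zero, mul_zero, add_zero]
  simp only [measure_univ, ENNReal.toReal_one, one_smul, probReal_univ]
  rw [integral_gauss_eq, hstdF₁, integral_indicator measurableSet_Iio, main1d B s hs]
end

section
/- Let V > 0, a > 0, T > 0 and H ∈ (0, 1/2]. Then ((∫_0^T V ds) · (∫_0^T V·a·u^{H−1/2} du)) / (√V · ∫_0^T √V · (∫_s^T V·a·(u−s)^{H−1/2} du) ds) = H + 3/2. (Computation in the Remark after Theorem 4 of the paper: when the initial forward variance curve V₀(t) ≡ V is flat and k(t) = a·t^{H−1/2}, the right-hand side of Theorem 4 equals H + 3/2.) -/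
open MeasureTheory Real Set

/-- Computation in the Remark after Theorem 4: when the initial forward variance curve is flat
(`V₀(t) ≡ V`) and `k(t) = a t^{H-1/2}`, the small vol-of-vol limit of the SSR equals
`H + 3/2`. -/
theorem flat_curve_ssr_limit (V a T H : ℝ) (hV : 0 < V) (ha : 0 < a) (hT : 0 < T)
    (hH0 : 0 < H) (hH : H ≤ 1 / 2) :
    ((∫ _s in Set.Ioo (0:ℝ) T, V) *
        (∫ u in Set.Ioo (0:ℝ) T, V * a * u ^ (H - 1 / 2))) /
      (Real.sqrt V *
        ∫ s in Set.Ioo (0:ℝ) T,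
          Real.sqrt V * ∫ u in Set.Ioo s T, V * a * (u - s) ^ (H - 1 / 2))
      = H + 3 / 2 := by
  have hr : (-1:ℝ) < H - 1/2 := by linarith
  have hHp : (0:ℝ) < H + 1/2 := by linarith
  have hHp3 : (0:ℝ) < H + 3/2 := by linarith
  have hne : H - 1/2 + 1 ≠ 0 := by linarith
  have e1 : (∫ _s in Set.Ioo (0:ℝ) T, V) = T * V := by
    simp [Real.volume_Ioo, ENNReal.toReal_ofReal hT.le, hT.le]
  have e2 : (∫ u in Set.Ioo (0:ℝ) T, V * a * u ^ (H - 1/2))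
      = V * a * (T ^ (H + 1/2) / (H + 1/2)) := by
    rw [← MeasureTheory.integral_Ioc_eq_integral_Ioo, ← intervalIntegral.integral_of_le hT.le,
      intervalIntegral.integral_const_mul, integral_rpow (Or.inl hr),
      Real.zero_rpow hne]
    ring_nf
  have inner : ∀ s ∈ Set.Ioo (0:ℝ) T,
      (∫ u in Set.Ioo s T, V * a * (u - s) ^ (H - 1/2))
      = V * a * ((T - s) ^ (H + 1/2) / (H + 1/2)) := by
    intro s hs
    rw [← MeasureTheory.integral_Ioc_eq_integral_Ioo,
      ← intervalIntegral.integral_of_le hs.2.le,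
      intervalIntegral.integral_const_mul,
      intervalIntegral.integral_comp_sub_right (fun x => x ^ (H - 1/2)) s,
      integral_rpow (Or.inl hr), sub_self, Real.zero_rpow hne]
    ring_nf
  have e3 : (∫ s in Set.Ioo (0:ℝ) T,
        Real.sqrt V * ∫ u in Set.Ioo s T, V * a * (u - s) ^ (H - 1/2))
      = Real.sqrt V * (V * a) * (T ^ (H + 3/2) / ((H + 1/2) * (H + 3/2))) := by
    rw [MeasureTheory.setIntegral_congr_fun measurableSet_Ioo
      (fun s hs => by rw [inner s hs])]
    rw [← MeasureTheory.integral_Ioc_eq_integral_Ioo, ← intervalIntegral.integral_of_le hT.le]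
    have : ∀ s, Real.sqrt V * (V * a * ((T - s) ^ (H + 1/2) / (H + 1/2)))
        = (Real.sqrt V * (V * a) / (H + 1/2)) * (T - s) ^ (H + 1/2) := by
      intro s; ring
    simp_rw [this]
    rw [intervalIntegral.integral_const_mul,
      intervalIntegral.integral_comp_sub_left (fun x => x ^ (H + 1/2)) T,
      sub_self, sub_zero, integral_rpow (Or.inl (by linarith)),
      Real.zero_rpow (by linarith : H + 1/2 + 1 ≠ 0)]
    field_simp
    ring_nf
  rw [e1, e2, e3]
  have hs : Real.sqrt V * Real.sqrt V = V := Real.mul_self_sqrt hV.le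
  have hT32 : T ^ ((1:ℝ)) * T ^ (H + 1/2) = T ^ (H + 3/2) := by
    rw [← Real.rpow_add hT]; ring_nf
  rw [Real.rpow_one] at hT32
  have hden : Real.sqrt V * (Real.sqrt V * (V * a) * (T ^ (H + 3/2) / ((H + 1/2) * (H + 3/2))))
      = V * (V * a) * (T ^ (H + 3/2) / ((H + 1/2) * (H + 3/2))) := by
    have h' : Real.sqrt V * (Real.sqrt V * (V * a) * (T ^ (H + 3/2) / ((H + 1/2) * (H + 3/2))))
        = (Real.sqrt V * Real.sqrt V) * (V * a) * (T ^ (H + 3/2) / ((H + 1/2) * (H + 3/2))) := by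
      ring
    rw [h', hs]
  rw [hden, ← hT32]
  field_simp
end
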